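/- Let F = ⟨f_1,…,f_r⟩ be a flip sequence realizing a shortest path from T_init to T_final, let f_{s_1},…,f_{s_l} be the source nodes (nodes with no incoming arcs) of the DAG D_F, and let I = {f_{s_1}^←,…,f_{s_l}^←} be their underlying diagonals in T_init. Then for every permutation π of I there exists a shortest path from T_init to T_final whose first l flips flip exactly the diagonals of I, in the order given by π. In other words, I is a safe-set. -/

import Mathlib

open Finset

/-- Two vertices of the convex `m`-gon are adjacent in the cyclic order. -/
def PolyAdj (m : ℕ) (a b : Fin m) : Prop :=
  (a.val + 1) % m = b.val ∨ (b.val + 1) % m = a.val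

/-- `e` is a diagonal of the convex `m`-gon: an unordered pair of distinct,
non-adjacent vertices. -/
def IsDiagonal (m : ℕ) (e : Finset (Fin m)) : Prop :=
  ∃ a b : Fin m, a ≠ b ∧ ¬ PolyAdj m a b ∧ e = {a, b}

/-- The cyclic distance from `a` to `x`, going forwards in the cyclic order. -/
def cycDist (m : ℕ) (a x : Fin m) : ℕ := (x.val + m - a.val) % m

/-- `x` lies strictly between `a` and `b` in the cyclic order. -/
def CycBtw (m : ℕ) (a x b : Fin m) : Prop :=
  0 < cycDist m a x ∧ cycDist m a x < cycDist m a b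

/-- Two chords cross: their endpoints strictly interleave in the cyclic order. -/
def Cross (m : ℕ) (e₁ e₂ : Finset (Fin m)) : Prop :=
  ∃ a b c d : Fin m, e₁ = {a, b} ∧ e₂ = {c, d} ∧ CycBtw m a c b ∧ CycBtw m b d a

/-- A triangulation of the convex `m`-gon: a maximal set of pairwise
non-crossing diagonals. -/
structure Triangulation (m : ℕ) where
  diagonals : Finset (Finset (Fin m))
  isDiagonal : ∀ e ∈ diagonals, IsDiagonal m e
  noncross : ∀ e₁ ∈ diagonals, ∀ e₂ ∈ diagonals, ¬ Cross m e₁ e₂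
  maximal : ∀ e, IsDiagonal m e → (∀ e' ∈ diagonals, ¬ Cross m e e') → e ∈ diagonals

/-- `e` is a side in the triangulation `T`: either an edge of the polygon
(between cyclically adjacent vertices) or a diagonal of `T`. -/
def IsSide (m : ℕ) (T : Triangulation m) (e : Finset (Fin m)) : Prop :=
  (∃ a b : Fin m, PolyAdj m a b ∧ e = {a, b}) ∨ e ∈ T.diagonals

/-- `t` is a triangle of the triangulation `T`: three distinct vertices each
pair of which forms a side of `T`. -/
def IsTriangle (m : ℕ) (T : Triangulation m) (t : Finset (Fin m)) : Prop :=
  ∃ a b c : Fin m, a ≠ b ∧ a ≠ c ∧ b ≠ c ∧ t = {a, b, c} ∧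
    IsSide m T {a, b} ∧ IsSide m T {a, c} ∧ IsSide m T {b, c}

/-- Two diagonals of `T` are neighbors if they both belong to `T` and lie on a
common triangle of `T`; they are independent otherwise. -/
def Neighbor (m : ℕ) (T : Triangulation m) (e₁ e₂ : Finset (Fin m)) : Prop :=
  e₁ ∈ T.diagonals ∧ e₂ ∈ T.diagonals ∧
    ∃ t, IsTriangle m T t ∧ e₁ ⊆ t ∧ e₂ ⊆ t

/-- `T'` is obtained from `T` by flipping the diagonal `e`, which removes `e`
and creates the new diagonal `e'` (necessarily the opposite diagonal of the
quadrilateral formed by the two triangles of `T` containing `e`, since `T'` is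
again a triangulation). -/
def IsFlip (m : ℕ) (T T' : Triangulation m) (e e' : Finset (Fin m)) : Prop :=
  e ∈ T.diagonals ∧ e' ∉ T.diagonals ∧
    T'.diagonals = insert e' (T.diagonals.erase e)

/-- `Ts 0, Ts 1, …, Ts r` is a sequence of triangulations in which `Ts (i+1)`
is obtained from `Ts i` by performing the flip `F i`, which removes the
diagonal `(F i).1` and creates the diagonal `(F i).2`. -/
def IsFlipSeq (m r : ℕ) (F : ℕ → Finset (Fin m) × Finset (Fin m))
    (Ts : ℕ → Triangulation m) : Prop :=
  ∀ i < r, IsFlip m (Ts i) (Ts (i + 1)) (F i).1 (F i).2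

/-- The flip distance between two triangulations: the minimum length of a flip
sequence transforming one into the other. -/
noncomputable def FlipDist (m : ℕ) (T T' : Triangulation m) : ℕ :=
  sInf {r | ∃ F Ts, IsFlipSeq m r F Ts ∧ Ts 0 = T ∧ Ts r = T'}

/-- `e` is a free-diagonal of `T` with respect to `Tfinal`: flipping `e` in `T`
creates a diagonal belonging to `Tfinal`. -/
def FreeDiagonal (m : ℕ) (T Tfinal : Triangulation m) (e : Finset (Fin m)) : Prop :=
  ∃ T' e', IsFlip m T T' e e' ∧ e' ∈ Tfinal.diagonals

/-- Arc of the DAG `D_F` associated to the flip sequence `F` with triangulation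
sequence `Ts`: there is an arc from flip `i` to flip `j` when `i < j` and the
diagonal created by flip `i` is a neighbor of the diagonal removed by flip `j`
in the triangulation `Ts j` in which flip `j` is performed. -/
def Arc (m r : ℕ) (F : ℕ → Finset (Fin m) × Finset (Fin m))
    (Ts : ℕ → Triangulation m) (i j : ℕ) : Prop :=
  i < j ∧ j < r ∧ Neighbor m (Ts j) (F i).2 (F j).1

/-- Flip `i` is a source node of the DAG `D_F`: a node with no incoming arcs. -/
def IsSource (m r : ℕ) (F : ℕ → Finset (Fin m) × Finset (Fin m))
    (Ts : ℕ → Triangulation m) (i : ℕ) : Prop :=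
  i < r ∧ ∀ j, ¬ Arc m r F Ts j i


section SFS
variable {m : ℕ}

lemma SFS_cycDist_def (a x : Fin m) :
    cycDist m a x = if a.val ≤ x.val then x.val - a.val else x.val + m - a.val := by
  unfold cycDist
  rcases le_or_gt a.val x.val with h | h
  · rw [if_pos h]
    have h2 : x.val + m - a.val = (x.val - a.val) + m := by omega
    rw [h2, Nat.add_mod_right, Nat.mod_eq_of_lt (by have := x.isLt; omega)]
  · rw [if_neg (by omega)]
    exact Nat.mod_eq_of_lt (by have := a.isLt; have := x.isLt; omega)

lemma SFS_succ_mod (a : Fin m) : (a.val + 1) % m = if a.val + 1 = m then 0 else a.val + 1 := by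
  have := a.isLt
  rcases eq_or_ne (a.val + 1) m with h | h
  · rw [if_pos h, h, Nat.mod_self]
  · rw [if_neg h]; exact Nat.mod_eq_of_lt (by omega)

lemma SFS_pair_eq {α : Type*} [DecidableEq α] {a b c d : α} (hab : a ≠ b)
    (h : ({a, b} : Finset α) = {c, d}) : (a = c ∧ b = d) ∨ (a = d ∧ b = c) := by
  have ha : a ∈ ({c, d} : Finset α) := h ▸ (by simp)
  have hb : b ∈ ({c, d} : Finset α) := h ▸ (by simp)
  have hc : c ∈ ({a, b} : Finset α) := h ▸ (by simp)
  have hd : d ∈ ({a, b} : Finset α) := h ▸ (by simp)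
  simp only [Finset.mem_insert, Finset.mem_singleton] at ha hb hc hd
  rcases ha with h1 | h1 <;> rcases hb with h2 | h2 <;> tauto

lemma SFS_pair_subset {α : Type*} [DecidableEq α] {a b x y w : α} (hab : a ≠ b)
    (h : ({a, b} : Finset α) ⊆ {x, y, w}) :
    ({a, b} : Finset α) = {x, y} ∨ ({a, b} : Finset α) = {x, w} ∨ ({a, b} : Finset α) = {y, w} := by
  have ha : a ∈ ({x, y, w} : Finset α) := h (by simp)
  have hb : b ∈ ({x, y, w} : Finset α) := h (by simp)
  simp only [Finset.mem_insert, Finset.mem_singleton] at ha hb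
  rcases ha with h1 | h1 | h1 <;> rcases hb with h2 | h2 | h2 <;>
    first
      | (exact absurd (h1.trans h2.symm) hab)
      | (subst h1; subst h2;
         first
           | exact Or.inl rfl
           | exact Or.inl (Finset.pair_comm _ _)
           | exact Or.inr (Or.inl rfl)
           | exact Or.inr (Or.inl (Finset.pair_comm _ _))
           | exact Or.inr (Or.inr rfl)
           | exact Or.inr (Or.inr (Finset.pair_comm _ _)))

lemma SFS_polyAdj_symm {a b : Fin m} (h : PolyAdj m a b) : PolyAdj m b a := h.symm

-- trichotomy
lemma SFS_trichotomy (hm : 3 ≤ m) {a b : Fin m} (x : Fin m) (hab : a ≠ b) (hxa : x ≠ a)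
    (hxb : x ≠ b) : CycBtw m a x b ∨ CycBtw m b x a := by
  have h1 := a.isLt; have h2 := b.isLt; have h3 := x.isLt
  simp only [CycBtw, SFS_cycDist_def, Fin.ext_iff] at *
  split_ifs <;> omega

lemma SFS_cross_symm {e₁ e₂ : Finset (Fin m)} (h : Cross m e₁ e₂) : Cross m e₂ e₁ := by
  obtain ⟨a, b, c, d, h1, h2, h3, h4⟩ := h
  refine ⟨c, d, b, a, h2, Finset.pair_comm a b ▸ h1, ?_, ?_⟩ <;>
  · have q1 := a.isLt; have q2 := b.isLt; have q3 := c.isLt; have q4 := d.isLt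
    simp only [CycBtw, SFS_cycDist_def] at *
    split_ifs at * <;> omega

set_option linter.unusedVariables false

/-- Normalization of a crossing w.r.t. a chosen labelling of the first chord. -/
lemma SFS_cross_norm {e₁ e₂ : Finset (Fin m)} {a b : Fin m} (h : Cross m e₁ e₂)
    (he : e₁ = {a, b}) : ∃ u v, e₂ = {u, v} ∧ CycBtw m a u b ∧ CycBtw m b v a := by
  obtain ⟨α, β, γ, δ, h1, h2, h3, h4⟩ := h
  have hαβ : α ≠ β := by
    intro hc; subst hc
    simp only [CycBtw, SFS_cycDist_def] at h3; split_ifs at h3 <;> omega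
  subst he
  rcases SFS_pair_eq hαβ h1.symm with ⟨ha, hb⟩ | ⟨ha, hb⟩
  · subst ha; subst hb; exact ⟨γ, δ, h2, h3, h4⟩
  · subst ha; subst hb; exact ⟨δ, γ, Finset.pair_comm γ δ ▸ h2, h4, h3⟩

lemma SFS_not_cross_edge {a b : Fin m} (hadj : PolyAdj m a b) (e : Finset (Fin m)) :
    ¬ Cross m e {a, b} := by
  intro h
  obtain ⟨u, v, he, h3, h4⟩ := SFS_cross_norm (SFS_cross_symm h) rfl
  have q1 := a.isLt; have q2 := b.isLt; have q3 := u.isLt; have q4 := v.isLt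
  simp only [CycBtw, SFS_cycDist_def, PolyAdj, SFS_succ_mod] at h3 h4 hadj
  split_ifs at h3 h4 hadj <;> omega

lemma SFS_not_cross_edge' {a b : Fin m} (hadj : PolyAdj m a b) (e : Finset (Fin m)) :
    ¬ Cross m {a, b} e := fun h => SFS_not_cross_edge hadj e (SFS_cross_symm h)

lemma SFS_not_cross_self (e : Finset (Fin m)) : ¬ Cross m e e := by
  rintro h
  obtain ⟨α, β, γ, δ, h1, h2, h3, h4⟩ := h
  obtain ⟨u, v, he, h5, h6⟩ := SFS_cross_norm (e₁ := e) (e₂ := e) ⟨α, β, γ, δ, h1, h2, h3, h4⟩ h1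
  subst h1
  have hαβ : α ≠ β := by
    intro hc; subst hc
    simp only [CycBtw, SFS_cycDist_def] at h3; split_ifs at h3 <;> omega
  have q1 := α.isLt; have q2 := β.isLt
  rcases SFS_pair_eq hαβ he with ⟨ha, hb⟩ | ⟨ha, hb⟩ <;> subst ha <;> subst hb <;>
  · simp only [CycBtw, SFS_cycDist_def] at h5 h6; split_ifs at h5 h6 <;> omega

/-- Sides of a triangulation never cross. -/
lemma SFS_sides_not_cross {T : Triangulation m} {e₁ e₂ : Finset (Fin m)}
    (h1 : IsSide m T e₁) (h2 : IsSide m T e₂) : ¬ Cross m e₁ e₂ := by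
  rcases h2 with ⟨a, b, hadj, rfl⟩ | h2
  · exact SFS_not_cross_edge hadj e₁
  rcases h1 with ⟨a, b, hadj, rfl⟩ | h1
  · exact SFS_not_cross_edge' hadj e₂
  exact T.noncross _ h1 _ h2

lemma SFS_diag_repr {e : Finset (Fin m)} (hd : IsDiagonal m e) {x y : Fin m}
    (he : e = {x, y}) (hxy : x ≠ y) : ¬ PolyAdj m x y := by
  obtain ⟨a, b, hab, hadj, rfl⟩ := hd
  rcases SFS_pair_eq hab he with ⟨h1, h2⟩ | ⟨h1, h2⟩
  · subst h1; subst h2; exact hadj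
  · subst h1; subst h2; exact fun h => hadj (SFS_polyAdj_symm h)

lemma SFS_diag_ne {e : Finset (Fin m)} (hd : IsDiagonal m e) : ∃ x y : Fin m, x ≠ y ∧
    ¬ PolyAdj m x y ∧ e = {x, y} := hd

/-- `c` is the apex of the triangle on the side of diagonal `{a,b}` going from `a` to `b`. -/
def SFS_ApexAt (m : ℕ) (T : Triangulation m) (a b c : Fin m) : Prop :=
  CycBtw m a c b ∧ IsSide m T {a, c} ∧ IsSide m T {c, b}

set_option maxHeartbeats 2000000 in
lemma SFS_apex_exists (hm : 3 ≤ m) {T : Triangulation m} {a b : Fin m}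
    (he : ({a, b} : Finset (Fin m)) ∈ T.diagonals) (hab : a ≠ b) (hadj : ¬ PolyAdj m a b) :
    ∃ c, SFS_ApexAt m T a b c := by
  classical
  have q1 := a.isLt; have q2 := b.isLt
  have hm0 : 0 < m := by omega
  have hDab : 2 ≤ cycDist m a b ∧ cycDist m a b ≤ m - 2 := by
    simp only [PolyAdj, SFS_succ_mod, Fin.ext_iff] at hadj hab
    push_neg at hadj
    simp only [SFS_cycDist_def]
    split_ifs at hadj ⊢ <;> omega
  have hSne : (Finset.univ.filter (fun c => CycBtw m a c b ∧ IsSide m T {a, c})).Nonempty := by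
    refine ⟨⟨(a.val + 1) % m, Nat.mod_lt _ hm0⟩, Finset.mem_filter.mpr ⟨Finset.mem_univ _, ?_, ?_⟩⟩
    · simp only [CycBtw, SFS_cycDist_def, SFS_succ_mod] at hDab ⊢
      split_ifs at hDab ⊢ <;> omega
    · exact Or.inl ⟨a, _, Or.inl (by simp [SFS_succ_mod]), rfl⟩
  obtain ⟨c, hcS, hmax⟩ := Finset.exists_max_image
    (Finset.univ.filter (fun c => CycBtw m a c b ∧ IsSide m T {a, c}))
    (fun c => cycDist m a c) hSne
  obtain ⟨-, hc1, hc2⟩ := Finset.mem_filter.mp hcS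
  have q3 := c.isLt
  refine ⟨c, hc1, hc2, ?_⟩
  by_contra hns
  have h1 : ({c, b} : Finset (Fin m)) ∉ T.diagonals := fun h => hns (Or.inr h)
  have h2 : ¬ PolyAdj m c b := fun h => hns (Or.inl ⟨c, b, h, rfl⟩)
  have hcb : c ≠ b := by
    intro h; subst h
    simp only [CycBtw] at hc1; omega
  obtain ⟨t, ht, hcross⟩ : ∃ t ∈ T.diagonals, Cross m {c, b} t := by
    by_contra hno; push_neg at hno
    exact h1 (T.maximal _ ⟨c, b, hcb, h2, rfl⟩ hno)
  obtain ⟨u, v, htuv, hu, hv⟩ := SFS_cross_norm hcross rfl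
  have q4 := u.isLt; have q5 := v.isLt
  have htri : v = a ∨ CycBtw m a v c ∨ CycBtw m b v a := by
    simp only [CycBtw, SFS_cycDist_def, Fin.ext_iff] at hc1 hu hv ⊢
    split_ifs at hc1 hu hv ⊢ <;> omega
  rcases htri with hva0 | hva | hba
  · -- t = {u, a} is a side from a going further than c : contradicts maximality of c
    rw [hva0] at htuv
    have hPu : CycBtw m a u b ∧ IsSide m T {a, u} := by
      constructor
      · simp only [CycBtw, SFS_cycDist_def] at hc1 hu ⊢
        split_ifs at hc1 hu ⊢ <;> omega
      · exact Or.inr (Finset.pair_comm u a ▸ htuv ▸ ht)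
    have hle := hmax u (Finset.mem_filter.mpr ⟨Finset.mem_univ _, hPu⟩)
    simp only [CycBtw, SFS_cycDist_def] at hc1 hu hle
    split_ifs at hc1 hu hle <;> omega
  · -- t crosses the side {a, c}
    refine SFS_sides_not_cross hc2 (Or.inr ht) ⟨a, c, v, u, rfl, htuv.trans (Finset.pair_comm u v), hva, ?_⟩
    simp only [CycBtw, SFS_cycDist_def] at hc1 hu hva ⊢
    split_ifs at hc1 hu hva ⊢ <;> omega
  · -- t crosses the diagonal {a, b} itself
    refine T.noncross _ he _ ht ⟨a, b, u, v, rfl, htuv, ?_, hba⟩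
    simp only [CycBtw, SFS_cycDist_def] at hc1 hu ⊢
    split_ifs at hc1 hu ⊢ <;> omega

lemma SFS_btw_ne {a x b : Fin m} (h : CycBtw m a x b) : x ≠ a ∧ x ≠ b ∧ a ≠ b := by
  have q1 := a.isLt; have q2 := b.isLt; have q3 := x.isLt
  simp only [CycBtw, SFS_cycDist_def, Fin.ext_iff] at h ⊢
  split_ifs at h <;> omega

lemma SFS_apex_unique {T : Triangulation m} {a b c c' : Fin m}
    (h : SFS_ApexAt m T a b c) (h' : SFS_ApexAt m T a b c') : c = c' := by
  obtain ⟨hb, hs1, hs2⟩ := h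
  obtain ⟨hb', hs1', hs2'⟩ := h'
  have q1 := a.isLt; have q2 := b.isLt; have q3 := c.isLt; have q4 := c'.isLt
  rcases lt_trichotomy (cycDist m a c) (cycDist m a c') with hlt | heq | hgt
  · exfalso
    refine SFS_sides_not_cross hs1' hs2 ⟨a, c', c, b, rfl, rfl, ?_, ?_⟩ <;>
    · simp only [CycBtw, SFS_cycDist_def] at hb hb' hlt ⊢
      split_ifs at hb hb' hlt ⊢ <;> omega
  · simp only [CycBtw, SFS_cycDist_def, Fin.ext_iff] at hb hb' heq ⊢
    split_ifs at hb hb' heq <;> omega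
  · exfalso
    refine SFS_sides_not_cross hs1 hs2' ⟨a, c, c', b, rfl, rfl, ?_, ?_⟩ <;>
    · simp only [CycBtw, SFS_cycDist_def] at hb hb' hgt ⊢
      split_ifs at hb hb' hgt ⊢ <;> omega

lemma SFS_side_comm {T : Triangulation m} {x y : Fin m} (h : IsSide m T {x, y}) :
    IsSide m T {y, x} := Finset.pair_comm x y ▸ h

lemma SFS_triangle_side {T : Triangulation m} {t : Finset (Fin m)} (ht : IsTriangle m T t)
    {x y : Fin m} (hx : x ∈ t) (hy : y ∈ t) (hxy : x ≠ y) : IsSide m T {x, y} := by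
  obtain ⟨a, b, c, hab, hac, hbc, rfl, s1, s2, s3⟩ := ht
  simp only [Finset.mem_insert, Finset.mem_singleton] at hx hy
  rcases hx with rfl | rfl | rfl <;> rcases hy with rfl | rfl | rfl <;>
    first
      | exact absurd rfl hxy
      | exact s1 | exact s2 | exact s3
      | exact SFS_side_comm s1
      | exact SFS_side_comm s2
      | exact SFS_side_comm s3

lemma SFS_third_vertex {t : Finset (Fin m)} {a b c x y : Fin m}
    (hab : a ≠ b) (hac : a ≠ c) (hbc : b ≠ c) (htri : t = {a, b, c}) (hxy : x ≠ y)
    (hsub : ({x, y} : Finset (Fin m)) ⊆ t) : ∃ w, w ≠ x ∧ w ≠ y ∧ t = {x, y, w} := by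
  classical
  have hcard : t.card = 3 := by
    subst htri
    rw [show ({a, b, c} : Finset (Fin m)) = insert a {b, c} from rfl,
      Finset.card_insert_of_notMem (by simp [hab, hac]), Finset.card_pair hbc]
  have hxy2 : ({x, y} : Finset (Fin m)).card = 2 := Finset.card_pair hxy
  have hsd : (t \ {x, y}).card = 1 := by
    rw [Finset.card_sdiff_of_subset hsub, hcard, hxy2]
  obtain ⟨w, hw⟩ := Finset.card_eq_one.mp hsd
  have hwmem : w ∈ t \ {x, y} := hw ▸ Finset.mem_singleton_self w
  rw [Finset.mem_sdiff, Finset.mem_insert, Finset.mem_singleton] at hwmem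
  obtain ⟨hwt, hwne⟩ := hwmem
  push_neg at hwne
  refine ⟨w, hwne.1, hwne.2, ?_⟩
  apply Finset.eq_of_subset_of_card_le ?_ ?_ |>.symm
  · intro z hz
    simp only [Finset.mem_insert, Finset.mem_singleton] at hz
    rcases hz with rfl | rfl | rfl
    · exact hsub (by simp)
    · exact hsub (by simp)
    · exact hwt
  · rw [hcard, show ({x, y, w} : Finset (Fin m)) = insert x {y, w} from rfl,
      Finset.card_insert_of_notMem (by simp [hxy, Ne.symm hwne.1]),
      Finset.card_pair (Ne.symm hwne.2)]

lemma SFS_apex_of_triangle (hm : 3 ≤ m) {T : Triangulation m} {t : Finset (Fin m)}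
    (ht : IsTriangle m T t) {x y : Fin m} (hxy : x ≠ y)
    (hsub : ({x, y} : Finset (Fin m)) ⊆ t) :
    ∃ w, w ≠ x ∧ w ≠ y ∧ t = {x, y, w} ∧
      (SFS_ApexAt m T x y w ∨ SFS_ApexAt m T y x w) := by
  have hx : x ∈ t := hsub (by simp)
  have hy : y ∈ t := hsub (by simp)
  obtain ⟨a, b, c, hab, hac, hbc, htr, s1, s2, s3⟩ := ht
  obtain ⟨w, hwx, hwy, htw⟩ := SFS_third_vertex hab hac hbc htr hxy hsub
  have hwt : w ∈ t := by rw [htw]; simp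
  have hsxw : IsSide m T {x, w} :=
    SFS_triangle_side ⟨a, b, c, hab, hac, hbc, htr, s1, s2, s3⟩ hx hwt (Ne.symm hwx)
  have hsyw : IsSide m T {y, w} :=
    SFS_triangle_side ⟨a, b, c, hab, hac, hbc, htr, s1, s2, s3⟩ hy hwt (Ne.symm hwy)
  refine ⟨w, hwx, hwy, htw, ?_⟩
  rcases SFS_trichotomy hm w hxy hwx hwy with h | h
  · exact Or.inl ⟨h, hsxw, Finset.pair_comm y w ▸ hsyw⟩
  · exact Or.inr ⟨h, hsyw, Finset.pair_comm x w ▸ hsxw⟩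

lemma SFS_apex_isTriangle {T : Triangulation m} {a b c : Fin m}
    (he : ({a, b} : Finset (Fin m)) ∈ T.diagonals) (h : SFS_ApexAt m T a b c) :
    IsTriangle m T {a, b, c} := by
  obtain ⟨hca, hcb, hab⟩ := SFS_btw_ne h.1
  exact ⟨a, b, c, hab, Ne.symm hca, Ne.symm hcb, rfl, Or.inr he, h.2.1,
    Finset.pair_comm b c ▸ h.2.2⟩

lemma SFS_pair_ne_of_ne {a b c : Fin m} (hca : c ≠ a) (hcb : c ≠ b) :
    ({c, b} : Finset (Fin m)) ≠ {a, b} := by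
  intro h
  rcases SFS_pair_eq hcb h with ⟨h1, h2⟩ | ⟨h1, h2⟩
  · exact hca h1
  · exact hcb h1

set_option maxHeartbeats 4000000 in
/-- A diagonal crossing `{a,b}` and nothing else in `T` must be the opposite diagonal `{c,d}`. -/
lemma SFS_forced (hm : 3 ≤ m) {T : Triangulation m} {a b c d : Fin m}
    (he : ({a, b} : Finset (Fin m)) ∈ T.diagonals)
    (hc : SFS_ApexAt m T a b c) (hd : SFS_ApexAt m T b a d)
    {g : Finset (Fin m)} (hcr : Cross m g {a, b})
    (hnc : ∀ t ∈ T.diagonals, t ≠ ({a, b} : Finset (Fin m)) → ¬ Cross m g t) : g = {c, d} := by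
  obtain ⟨hcw, hcs1, hcs2⟩ := hc
  obtain ⟨hdw, hds1, hds2⟩ := hd
  obtain ⟨hca, hcb, hab⟩ := SFS_btw_ne hcw
  obtain ⟨hdb, hda, hba⟩ := SFS_btw_ne hdw
  have hside : ∀ s, IsSide m T s → s ≠ ({a, b} : Finset (Fin m)) → ¬ Cross m g s := by
    intro s hs hne hcrs
    rcases hs with ⟨p, q, hadj, rfl⟩ | hs
    · exact SFS_not_cross_edge hadj g hcrs
    · exact hnc s hs hne hcrs
  obtain ⟨u, v, guv, hu, hv⟩ := SFS_cross_norm (SFS_cross_symm hcr) rfl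
  have q1 := a.isLt; have q2 := b.isLt; have q3 := c.isLt; have q4 := d.isLt
  have q5 := u.isLt; have q6 := v.isLt
  have hu3 : CycBtw m a u c ∨ u = c ∨ CycBtw m c u b := by
    simp only [CycBtw, SFS_cycDist_def, Fin.ext_iff] at hu hcw ⊢
    split_ifs at hu hcw ⊢ <;> omega
  have hv3 : CycBtw m b v d ∨ v = d ∨ CycBtw m d v a := by
    simp only [CycBtw, SFS_cycDist_def, Fin.ext_iff] at hv hdw ⊢
    split_ifs at hv hdw ⊢ <;> omega
  have huc : u = c := by
    rcases hu3 with h | h | h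
    · exfalso
      refine hside {a, c} hcs1 ?_ (SFS_cross_symm ⟨a, c, u, v, rfl, guv, h, ?_⟩)
      · intro hq
        rcases SFS_pair_eq (Ne.symm hca) hq with ⟨h1, h2⟩ | ⟨h1, h2⟩
        · exact hcb h2
        · exact hab h1
      · simp only [CycBtw, SFS_cycDist_def] at hv hcw ⊢
        split_ifs at hv hcw ⊢ <;> omega
    · exact h
    · exfalso
      refine hside {c, b} hcs2 (SFS_pair_ne_of_ne hca hcb)
        (SFS_cross_symm ⟨c, b, u, v, rfl, guv, h, ?_⟩)
      simp only [CycBtw, SFS_cycDist_def] at hv hcw ⊢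
      split_ifs at hv hcw ⊢ <;> omega
  have hvd : v = d := by
    rcases hv3 with h | h | h
    · exfalso
      refine hside {b, d} hds1 ?_
        (SFS_cross_symm ⟨b, d, v, u, rfl, guv.trans (Finset.pair_comm u v), h, ?_⟩)
      · intro hq
        rcases SFS_pair_eq (Ne.symm hdb) hq with ⟨h1, h2⟩ | ⟨h1, h2⟩
        · exact hab h1.symm
        · exact hda h2
      · simp only [CycBtw, SFS_cycDist_def] at hu hdw ⊢
        split_ifs at hu hdw ⊢ <;> omega
    · exact h
    · exfalso
      refine hside {d, a} hds2 ?_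
        (SFS_cross_symm ⟨d, a, v, u, rfl, guv.trans (Finset.pair_comm u v), h, ?_⟩)
      · intro hq
        rcases SFS_pair_eq hda hq with ⟨h1, h2⟩ | ⟨h1, h2⟩
        · exact hda h1
        · exact hdb h1
      · simp only [CycBtw, SFS_cycDist_def] at hu hdw ⊢
        split_ifs at hu hdw ⊢ <;> omega
  rw [guv, huc, hvd]

lemma SFS_opp_cross {T : Triangulation m} {a b c d : Fin m}
    (hc : SFS_ApexAt m T a b c) (hd : SFS_ApexAt m T b a d) :
    Cross m {a, b} {c, d} := ⟨a, b, c, d, rfl, rfl, hc.1, hd.1⟩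

lemma SFS_opp_isDiagonal (hm : 3 ≤ m) {T : Triangulation m} {a b c d : Fin m}
    (hc : SFS_ApexAt m T a b c) (hd : SFS_ApexAt m T b a d) :
    IsDiagonal m ({c, d} : Finset (Fin m)) := by
  have hcw := hc.1; have hdw := hd.1
  have q1 := a.isLt; have q2 := b.isLt; have q3 := c.isLt; have q4 := d.isLt
  refine ⟨c, d, ?_, ?_, rfl⟩
  · simp only [CycBtw, SFS_cycDist_def, Fin.ext_iff] at hcw hdw ⊢
    split_ifs at hcw hdw ⊢ <;> omega
  · simp only [CycBtw, SFS_cycDist_def, PolyAdj, SFS_succ_mod, Fin.ext_iff] at hcw hdw ⊢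
    push_neg
    constructor <;> [skip; skip] <;> split_ifs at hcw hdw ⊢ <;> omega

lemma SFS_cycBtw_iff (a x b : Fin m) : CycBtw m a x b ↔
    ((a.val < x.val ∧ x.val < b.val) ∨ (b.val < a.val ∧ a.val < x.val) ∨
      (x.val < b.val ∧ b.val < a.val)) := by
  have q1 := a.isLt; have q2 := b.isLt; have q3 := x.isLt
  simp only [CycBtw, SFS_cycDist_def]
  split_ifs <;> omega

lemma SFS_polyAdj_iff (a b : Fin m) : PolyAdj m a b ↔
    (a.val + 1 = b.val ∨ b.val + 1 = a.val ∨ (a.val + 1 = m ∧ b.val = 0) ∨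
      (b.val + 1 = m ∧ a.val = 0)) := by
  have q1 := a.isLt; have q2 := b.isLt
  simp only [PolyAdj, SFS_succ_mod]
  split_ifs <;> omega

set_option maxHeartbeats 1000000 in
/-- The opposite diagonal `{c,d}` crosses nothing in `T` except `{a,b}`. -/
lemma SFS_opp_nocross (hm : 3 ≤ m) {T : Triangulation m} {a b c d : Fin m}
    (he : ({a, b} : Finset (Fin m)) ∈ T.diagonals)
    (hc : SFS_ApexAt m T a b c) (hd : SFS_ApexAt m T b a d)
    {t : Finset (Fin m)} (ht : t ∈ T.diagonals) (hta : t ≠ ({a, b} : Finset (Fin m))) :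
    ¬ Cross m ({c, d} : Finset (Fin m)) t := by
  intro hcr
  obtain ⟨hcw, hcs1, hcs2⟩ := hc
  obtain ⟨hdw, hds1, hds2⟩ := hd
  obtain ⟨u, v, guv, hu, hv⟩ := SFS_cross_norm hcr rfl
  simp only [SFS_cycBtw_iff] at hcw hdw hu hv
  have hu3 : CycBtw m c u b ∨ u = b ∨ CycBtw m b u d := by
    simp only [SFS_cycBtw_iff, Fin.ext_iff]; omega
  have hv3 : CycBtw m d v a ∨ v = a ∨ CycBtw m a v c := by
    simp only [SFS_cycBtw_iff, Fin.ext_iff]; omega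
  have hts : IsSide m T t := Or.inr ht
  rcases hu3 with h1 | h1 | h1 <;> rcases hv3 with h2 | h2 | h2
  · -- u ∈ (c,b), v ∈ (d,a) : t crosses {a,b}
    refine SFS_sides_not_cross (Or.inr he) hts ⟨a, b, u, v, rfl, guv, ?_, ?_⟩ <;>
      (simp only [SFS_cycBtw_iff] at h1 h2 ⊢; omega)
  · -- u ∈ (c,b), v = a : t crosses {c,b}
    refine SFS_sides_not_cross hcs2 hts ⟨c, b, u, v, rfl, guv, h1, ?_⟩
    subst h2
    simp only [SFS_cycBtw_iff] at h1 ⊢; omega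
  · -- u ∈ (c,b), v ∈ (a,c) : t crosses {c,b}
    refine SFS_sides_not_cross hcs2 hts ⟨c, b, u, v, rfl, guv, h1, ?_⟩
    simp only [SFS_cycBtw_iff] at h1 h2 ⊢; omega
  · -- u = b, v ∈ (d,a) : t crosses {d,a}
    refine SFS_sides_not_cross hds2 hts ⟨d, a, v, u, rfl, guv.trans (Finset.pair_comm u v), h2, ?_⟩
    subst h1
    simp only [SFS_cycBtw_iff] at h2 ⊢; omega
  · -- u = b, v = a : t = {a,b}, contradiction
    exact hta (by rw [guv, h1, h2, Finset.pair_comm])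
  · -- u = b, v ∈ (a,c) : t crosses {a,c}
    refine SFS_sides_not_cross hcs1 hts ⟨a, c, v, u, rfl, guv.trans (Finset.pair_comm u v), h2, ?_⟩
    subst h1
    simp only [SFS_cycBtw_iff] at h2 ⊢; omega
  · -- u ∈ (b,d), v ∈ (d,a) : t crosses {b,d}
    refine SFS_sides_not_cross hds1 hts ⟨b, d, u, v, rfl, guv, h1, ?_⟩
    simp only [SFS_cycBtw_iff] at h1 h2 ⊢; omega
  · -- u ∈ (b,d), v = a : t crosses {b,d}
    refine SFS_sides_not_cross hds1 hts ⟨b, d, u, v, rfl, guv, h1, ?_⟩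
    subst h2
    simp only [SFS_cycBtw_iff] at h1 ⊢; omega
  · -- u ∈ (b,d), v ∈ (a,c) : t crosses {a,b}
    refine SFS_sides_not_cross (Or.inr he) hts
      ⟨a, b, v, u, rfl, guv.trans (Finset.pair_comm u v), ?_, ?_⟩ <;>
      (simp only [SFS_cycBtw_iff] at h1 h2 ⊢; omega)

lemma SFS_tri_ext {T T' : Triangulation m} (h : T.diagonals = T'.diagonals) : T = T' := by
  cases T; cases T'; simpa using h

lemma SFS_flip_exists (hm : 3 ≤ m) {T : Triangulation m} {a b c d : Fin m}
    (he : ({a, b} : Finset (Fin m)) ∈ T.diagonals)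
    (hc : SFS_ApexAt m T a b c) (hd : SFS_ApexAt m T b a d) :
    ∃ T' : Triangulation m, IsFlip m T T' {a, b} {c, d} := by
  have hcde : Cross m {a, b} {c, d} := SFS_opp_cross hc hd
  have hnm : ({c, d} : Finset (Fin m)) ∉ T.diagonals := fun h => T.noncross _ he _ h hcde
  refine ⟨⟨insert {c, d} (T.diagonals.erase {a, b}), ?_, ?_, ?_⟩, he, hnm, rfl⟩
  · intro e' he'
    rcases Finset.mem_insert.mp he' with rfl | h
    · exact SFS_opp_isDiagonal hm hc hd
    · exact T.isDiagonal _ (Finset.mem_of_mem_erase h)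
  · intro e₁ h₁ e₂ h₂
    rcases Finset.mem_insert.mp h₁ with rfl | h₁ <;> rcases Finset.mem_insert.mp h₂ with rfl | h₂
    · exact SFS_not_cross_self _
    · exact SFS_opp_nocross hm he hc hd (Finset.mem_of_mem_erase h₂) (Finset.ne_of_mem_erase h₂)
    · exact fun hcr => SFS_opp_nocross hm he hc hd (Finset.mem_of_mem_erase h₁)
        (Finset.ne_of_mem_erase h₁) (SFS_cross_symm hcr)
    · exact T.noncross _ (Finset.mem_of_mem_erase h₁) _ (Finset.mem_of_mem_erase h₂)
  · intro g hgdiag hgnc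
    by_cases hge : g = ({c, d} : Finset (Fin m))
    · exact hge ▸ Finset.mem_insert_self _ _
    by_cases hgcr : Cross m g {a, b}
    · exact absurd (SFS_forced hm he hc hd hgcr (fun t ht htne =>
        hgnc t (Finset.mem_insert_of_mem (Finset.mem_erase.mpr ⟨htne, ht⟩)))) hge
    · have hgT : g ∈ T.diagonals := T.maximal g hgdiag (fun t ht => by
        by_cases hte : t = ({a, b} : Finset (Fin m))
        · exact hte ▸ hgcr
        · exact hgnc t (Finset.mem_insert_of_mem (Finset.mem_erase.mpr ⟨hte, ht⟩)))
      have hgne : g ≠ ({a, b} : Finset (Fin m)) := by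
        rintro rfl
        exact hgnc _ (Finset.mem_insert_self _ _) hcde
      exact Finset.mem_insert_of_mem (Finset.mem_erase.mpr ⟨hgne, hgT⟩)

lemma SFS_flip_created_eq (hm : 3 ≤ m) {T T' : Triangulation m} {a b c d : Fin m}
    {e' : Finset (Fin m)} (hf : IsFlip m T T' {a, b} e')
    (hc : SFS_ApexAt m T a b c) (hd : SFS_ApexAt m T b a d) : e' = {c, d} := by
  obtain ⟨h1, h2, h3⟩ := hf
  have he' : e' ∈ T'.diagonals := h3 ▸ Finset.mem_insert_self _ _
  have hdiag' : IsDiagonal m e' := T'.isDiagonal _ he'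
  have hnc : ∀ t ∈ T.diagonals, t ≠ ({a, b} : Finset (Fin m)) → ¬ Cross m e' t :=
    fun t ht htne => T'.noncross _ he' _
      (h3 ▸ Finset.mem_insert_of_mem (Finset.mem_erase.mpr ⟨htne, ht⟩))
  have hcr : Cross m e' {a, b} := by
    by_contra hno
    refine h2 (T.maximal e' hdiag' (fun t ht => ?_))
    by_cases hte : t = ({a, b} : Finset (Fin m))
    · exact hte ▸ hno
    · exact hnc t ht hte
  exact SFS_forced hm h1 hc hd hcr hnc

/-- The opposite diagonal of `e` in `T`. -/
def SFS_Opp (m : ℕ) (T : Triangulation m) (e d : Finset (Fin m)) : Prop :=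
  ∃ a b c c' : Fin m, e = {a, b} ∧ SFS_ApexAt m T a b c ∧ SFS_ApexAt m T b a c' ∧ d = {c, c'}

lemma SFS_opp_exists (hm : 3 ≤ m) {T : Triangulation m} {e : Finset (Fin m)}
    (he : e ∈ T.diagonals) : ∃ d, SFS_Opp m T e d := by
  obtain ⟨a, b, hab, hadj, rfl⟩ := T.isDiagonal _ he
  obtain ⟨c, hc⟩ := SFS_apex_exists hm he hab hadj
  obtain ⟨c', hc'⟩ := SFS_apex_exists hm (Finset.pair_comm a b ▸ he) hab.symm
    (fun h => hadj (SFS_polyAdj_symm h))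
  exact ⟨{c, c'}, a, b, c, c', rfl, hc, hc', rfl⟩

lemma SFS_opp_flip (hm : 3 ≤ m) {T : Triangulation m} {e d : Finset (Fin m)}
    (he : e ∈ T.diagonals) (h : SFS_Opp m T e d) : ∃ T', IsFlip m T T' e d := by
  obtain ⟨a, b, c, c', rfl, hc, hc', rfl⟩ := h
  exact SFS_flip_exists hm he hc hc'

lemma SFS_isFlip_opp (hm : 3 ≤ m) {T T' : Triangulation m} {e e' : Finset (Fin m)}
    (hf : IsFlip m T T' e e') : SFS_Opp m T e e' := by
  obtain ⟨a, b, hab, hadj, heq⟩ := T.isDiagonal _ hf.1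
  subst heq
  obtain ⟨c, hc⟩ := SFS_apex_exists hm hf.1 hab hadj
  obtain ⟨c', hc'⟩ := SFS_apex_exists hm (Finset.pair_comm a b ▸ hf.1) hab.symm
    (fun h => hadj (SFS_polyAdj_symm h))
  exact ⟨a, b, c, c', rfl, hc, hc', SFS_flip_created_eq hm hf hc hc'⟩

lemma SFS_opp_unique {T : Triangulation m} {e d d' : Finset (Fin m)}
    (h : SFS_Opp m T e d) (h' : SFS_Opp m T e d') : d = d' := by
  obtain ⟨a, b, c1, c2, rfl, hc1, hc2, rfl⟩ := h
  obtain ⟨a', b', c1', c2', heq, hc1', hc2', rfl⟩ := h'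
  have hab : a ≠ b := (SFS_btw_ne hc1.1).2.2
  rcases SFS_pair_eq hab heq with ⟨r1, r2⟩ | ⟨r1, r2⟩
  · subst r1; subst r2
    rw [SFS_apex_unique hc1 hc1', SFS_apex_unique hc2 hc2']
  · subst r1; subst r2
    rw [SFS_apex_unique hc1 hc2', SFS_apex_unique hc2 hc1']
    exact Finset.pair_comm _ _

lemma SFS_opp_props (hm : 3 ≤ m) {T : Triangulation m} {e d : Finset (Fin m)}
    (he : e ∈ T.diagonals) (h : SFS_Opp m T e d) :
    Cross m e d ∧ Cross m d e ∧ IsDiagonal m d ∧ d ∉ T.diagonals := by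
  obtain ⟨a, b, c, c', rfl, hc, hc', rfl⟩ := h
  have h1 := SFS_opp_cross hc hc'
  exact ⟨h1, SFS_cross_symm h1, SFS_opp_isDiagonal hm hc hc',
    fun hmem => T.noncross _ he _ hmem h1⟩

lemma SFS_flip_mem {T T' : Triangulation m} {f f' g : Finset (Fin m)}
    (hf : IsFlip m T T' f f') (hg : g ∈ T.diagonals) (hne : g ≠ f) : g ∈ T'.diagonals :=
  hf.2.2 ▸ Finset.mem_insert_of_mem (Finset.mem_erase.mpr ⟨hne, hg⟩)

lemma SFS_flip_created_mem {T T' : Triangulation m} {f f' : Finset (Fin m)}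
    (hf : IsFlip m T T' f f') : f' ∈ T'.diagonals :=
  hf.2.2 ▸ Finset.mem_insert_self _ _

lemma SFS_flip_apex_preserved {T T' : Triangulation m} {f f' : Finset (Fin m)}
    (hf : IsFlip m T T' f f') {x y : Fin m} (hg : ({x, y} : Finset (Fin m)) ∈ T.diagonals)
    (hnb : ¬ Neighbor m T f ({x, y} : Finset (Fin m))) {c : Fin m}
    (h : SFS_ApexAt m T x y c) : SFS_ApexAt m T' x y c := by
  obtain ⟨hb, hs1, hs2⟩ := h
  have htri : IsTriangle m T {x, y, c} := SFS_apex_isTriangle hg ⟨hb, hs1, hs2⟩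
  have transfer : ∀ s : Finset (Fin m), IsSide m T s → s ⊆ ({x, y, c} : Finset (Fin m)) →
      IsSide m T' s := by
    intro s hs hsub
    rcases hs with hedge | hsT
    · exact Or.inl hedge
    · have hne : s ≠ f := by
        rintro rfl
        exact hnb ⟨hsT, hg, {x, y, c}, htri, hsub, by intro z hz; simp at hz ⊢; tauto⟩
      exact Or.inr (SFS_flip_mem hf hsT hne)
  exact ⟨hb, transfer _ hs1 (by intro z hz; simp at hz ⊢; tauto),
    transfer _ hs2 (by intro z hz; simp at hz ⊢; tauto)⟩

lemma SFS_flip_apex_eq (hm : 3 ≤ m) {T T' : Triangulation m} {f f' : Finset (Fin m)}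
    (hf : IsFlip m T T' f f') {x y : Fin m} (hg : ({x, y} : Finset (Fin m)) ∈ T.diagonals)
    (hxy : x ≠ y) (hnb : ¬ Neighbor m T f ({x, y} : Finset (Fin m))) (c : Fin m) :
    SFS_ApexAt m T x y c ↔ SFS_ApexAt m T' x y c := by
  obtain ⟨c₀, hc₀⟩ := SFS_apex_exists hm hg hxy (SFS_diag_repr (T.isDiagonal _ hg) rfl hxy)
  have hc₀' := SFS_flip_apex_preserved hf hg hnb hc₀
  constructor
  · intro h; rw [SFS_apex_unique h hc₀]; exact hc₀'
  · intro h; rw [SFS_apex_unique h hc₀']; exact hc₀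

lemma SFS_flip_opp_preserved (hm : 3 ≤ m) {T T' : Triangulation m} {f f' g dg : Finset (Fin m)}
    (hf : IsFlip m T T' f f') (hg : g ∈ T.diagonals) (hnb : ¬ Neighbor m T f g)
    (ho : SFS_Opp m T g dg) : SFS_Opp m T' g dg := by
  obtain ⟨a, b, c, c', rfl, hc, hc', rfl⟩ := ho
  have hab : a ≠ b := (SFS_btw_ne hc.1).2.2
  have hg' : ({b, a} : Finset (Fin m)) ∈ T.diagonals := Finset.pair_comm a b ▸ hg
  have hnb' : ¬ Neighbor m T f ({b, a} : Finset (Fin m)) := by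
    rw [Finset.pair_comm b a]; exact hnb
  exact ⟨a, b, c, c', rfl, (SFS_flip_apex_eq hm hf hg hab hnb c).mp hc,
    (SFS_flip_apex_eq hm hf hg' hab.symm hnb' c').mp hc', rfl⟩

lemma SFS_flip_indep_preserved (hm : 3 ≤ m) {T T' : Triangulation m}
    {f f' g h : Finset (Fin m)} (hf : IsFlip m T T' f f')
    (hgT : g ∈ T.diagonals) (hhT : h ∈ T.diagonals)
    (hfg : ¬ Neighbor m T f g) (hfh : ¬ Neighbor m T f h)
    (hgh : ¬ Neighbor m T g h) : ¬ Neighbor m T' g h := by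
  rintro ⟨hgT', hhT', t, htri, hgt, hht⟩
  obtain ⟨x, y, hxy, hadj, rfl⟩ := T.isDiagonal _ hgT
  obtain ⟨w, hwx, hwy, htw, hapex⟩ := SFS_apex_of_triangle hm htri hxy hgt
  have htriT : IsTriangle m T t := by
    rcases hapex with ha | ha
    · have haT : SFS_ApexAt m T x y w := (SFS_flip_apex_eq hm hf hgT hxy hfg w).mpr ha
      rw [htw]
      exact SFS_apex_isTriangle hgT haT
    · have hg' : ({y, x} : Finset (Fin m)) ∈ T.diagonals := Finset.pair_comm x y ▸ hgT
      have hnb' : ¬ Neighbor m T f ({y, x} : Finset (Fin m)) := by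
        rw [Finset.pair_comm y x]; exact hfg
      have haT : SFS_ApexAt m T y x w := (SFS_flip_apex_eq hm hf hg' hxy.symm hnb' w).mpr ha
      have h1 : IsTriangle m T {y, x, w} := SFS_apex_isTriangle hg' haT
      have h2 : ({y, x, w} : Finset (Fin m)) = {x, y, w} := by ext z; simp; tauto
      rw [htw, ← h2]
      exact h1
  exact hgh ⟨hgT, hhT, t, htriT, hgt, hht⟩

lemma SFS_multiflip (hm : 3 ≤ m) (L : List (Finset (Fin m) × Finset (Fin m))) :
    ∀ (T : Triangulation m),
    (∀ u ∈ L, u.1 ∈ T.diagonals ∧ SFS_Opp m T u.1 u.2) →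
    L.Pairwise (fun u v => u.1 ≠ v.1 ∧ ¬ Neighbor m T u.1 v.1) →
    ∃ Tstar : Triangulation m,
      Tstar.diagonals = (T.diagonals \ (L.map Prod.fst).toFinset) ∪ (L.map Prod.snd).toFinset := by
  induction L with
  | nil => intro T _ _; exact ⟨T, by simp⟩
  | cons u L' ih =>
    intro T hmem hpw
    obtain ⟨heT, hopp⟩ := hmem u List.mem_cons_self
    obtain ⟨T1, hflip⟩ := SFS_opp_flip hm heT hopp
    obtain ⟨-, -, -, hd_notmem⟩ := SFS_opp_props hm heT hopp
    rcases List.pairwise_cons.mp hpw with ⟨hhead, hpw'⟩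
    have hmem1 : ∀ v ∈ L', v.1 ∈ T1.diagonals ∧ SFS_Opp m T1 v.1 v.2 := by
      intro v hv
      obtain ⟨hvT, hvopp⟩ := hmem v (List.mem_cons_of_mem _ hv)
      obtain ⟨hne, hnb⟩ := hhead v hv
      exact ⟨SFS_flip_mem hflip hvT (Ne.symm hne),
        SFS_flip_opp_preserved hm hflip hvT hnb hvopp⟩
    have hpw1 : L'.Pairwise (fun v w => v.1 ≠ w.1 ∧ ¬ Neighbor m T1 v.1 w.1) := by
      refine List.Pairwise.imp_of_mem ?_ hpw'
      intro v w hv hw hvw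
      obtain ⟨hnev, hnbv⟩ := hhead v hv
      obtain ⟨hnew, hnbw⟩ := hhead w hw
      exact ⟨hvw.1, SFS_flip_indep_preserved hm hflip
        (hmem v (List.mem_cons_of_mem _ hv)).1 (hmem w (List.mem_cons_of_mem _ hw)).1
        hnbv hnbw hvw.2⟩
    obtain ⟨Tstar, hTs⟩ := ih T1 hmem1 hpw1
    refine ⟨Tstar, ?_⟩
    rw [hTs, hflip.2.2]
    have h2F : u.2 ∉ (L'.map Prod.fst).toFinset := by
      simp only [List.mem_toFinset, List.mem_map]
      rintro ⟨v, hv, hveq⟩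
      exact hd_notmem (hveq ▸ (hmem v (List.mem_cons_of_mem _ hv)).1)
    ext z
    have h2F2 : z = u.2 → z ∉ (L'.map Prod.fst).toFinset := fun h => h ▸ h2F
    simp only [List.map_cons, List.toFinset_cons, Finset.mem_union, Finset.mem_sdiff,
      Finset.mem_insert, Finset.mem_erase]
    tauto

lemma SFS_side_diag {T : Triangulation m} {e : Finset (Fin m)} (hs : IsSide m T e)
    (hd : IsDiagonal m e) : e ∈ T.diagonals := by
  rcases hs with ⟨a, b, hadj, rfl⟩ | h
  · exfalso
    have hab : a ≠ b := by
      obtain ⟨x, y, hxy, -, heq⟩ := hd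
      intro h; subst h
      have hx : x ∈ ({a, a} : Finset (Fin m)) := by rw [heq]; simp
      have hy : y ∈ ({a, a} : Finset (Fin m)) := by rw [heq]; simp
      simp at hx hy
      exact hxy (hx.trans hy.symm)
    exact SFS_diag_repr hd rfl hab hadj
  · exact h

lemma SFS_neighbor_symm {T : Triangulation m} {e₁ e₂ : Finset (Fin m)}
    (h : Neighbor m T e₁ e₂) : Neighbor m T e₂ e₁ := by
  obtain ⟨h1, h2, t, ht, hs1, hs2⟩ := h
  exact ⟨h2, h1, t, ht, hs2, hs1⟩

lemma SFS_neighbor_self (hm : 3 ≤ m) {T : Triangulation m} {g : Finset (Fin m)}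
    (hg : g ∈ T.diagonals) : Neighbor m T g g := by
  obtain ⟨a, b, hab, hadj, rfl⟩ := T.isDiagonal _ hg
  obtain ⟨c, hc⟩ := SFS_apex_exists hm hg hab hadj
  refine ⟨hg, hg, {a, b, c}, SFS_apex_isTriangle hg hc, ?_, ?_⟩ <;>
    (intro z hz; simp at hz ⊢; tauto)

lemma SFS_flip_removed {T T' : Triangulation m} {e e' : Finset (Fin m)}
    (hf : IsFlip m T T' e e') : e ∉ T'.diagonals := by
  rw [hf.2.2]
  intro h
  rcases Finset.mem_insert.mp h with rfl | h
  · exact hf.2.1 hf.1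
  · exact (Finset.mem_erase.mp h).1 rfl

lemma SFS_isFlip_congr {T1 T2 T1' T2' : Triangulation m} {e e' : Finset (Fin m)}
    (h1 : T1.diagonals = T2.diagonals) (h2 : T1'.diagonals = T2'.diagonals)
    (hf : IsFlip m T1 T1' e e') : IsFlip m T2 T2' e e' := by
  obtain ⟨ha, hb, hc⟩ := hf
  exact ⟨h1 ▸ ha, h1 ▸ hb, h2 ▸ h1 ▸ hc⟩

lemma SFS_exists_add {r : ℕ} {F : ℕ → Finset (Fin m) × Finset (Fin m)}
    {Ts : ℕ → Triangulation m} (hseq : IsFlipSeq m r F Ts) (g : Finset (Fin m)) (k : ℕ) :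
    ∀ j, k ≤ j → j ≤ r → g ∉ (Ts k).diagonals → g ∈ (Ts j).diagonals →
      ∃ i, k ≤ i ∧ i < j ∧ (F i).2 = g := by
  intro j
  induction j with
  | zero =>
    intro hkj _ h1 h2
    interval_cases k
    exact absurd h2 h1
  | succ j ih =>
    intro hkj hjr h1 h2
    rcases Nat.eq_or_lt_of_le hkj with rfl | hkj'
    · exact absurd h2 h1
    · by_cases hg : g ∈ (Ts j).diagonals
      · obtain ⟨i, hi1, hi2, hi3⟩ := ih (by omega) (by omega) h1 hg
        exact ⟨i, hi1, by omega, hi3⟩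
      · have hflip := hseq j (by omega)
        rw [hflip.2.2] at h2
        rcases Finset.mem_insert.mp h2 with heq | hmem
        · exact ⟨j, by omega, by omega, heq.symm⟩
        · exact absurd (Finset.mem_of_mem_erase hmem) hg

set_option maxHeartbeats 4000000 in
/-- Let `F` be a flip sequence realizing a shortest path from `Tinit` to
`Tfinal`, let `s 0, …, s (l-1)` enumerate (without repetition) the source
nodes of the DAG `D_F`, and let `I = {(F (s 0)).1, …, (F (s (l-1))).1}` be
their underlying diagonals in `Tinit`. Then for every permutation `τ` of `I`
there exists a shortest path from `Tinit` to `Tfinal` whose first `l` flips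
flip exactly the diagonals of `I`, in the order given by `τ`. In other words,
`I` is a safe-set. -/
theorem sources_form_safe_set (m : ℕ) (hm : 3 ≤ m)
    (Tinit Tfinal : Triangulation m)
    (r : ℕ) (F : ℕ → Finset (Fin m) × Finset (Fin m)) (Ts : ℕ → Triangulation m)
    (hseq : IsFlipSeq m r F Ts) (h0 : Ts 0 = Tinit) (hr : Ts r = Tfinal)
    (hmin : r = FlipDist m Tinit Tfinal)
    (l : ℕ) (s : Fin l → ℕ) (hinj : Function.Injective s)
    (hsrc : ∀ p : Fin l, IsSource m r F Ts (s p))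
    (hall : ∀ i : ℕ, IsSource m r F Ts i → ∃ p : Fin l, s p = i)
    (τ : Equiv.Perm (Fin l)) :
    ∃ (F' : ℕ → Finset (Fin m) × Finset (Fin m)) (Ts' : ℕ → Triangulation m),
      IsFlipSeq m r F' Ts' ∧ Ts' 0 = Tinit ∧ Ts' r = Tfinal ∧
      ∀ p : Fin l, (F' p.val).1 = (F (s (τ p))).1 := by
  classical
  subst h0
  rcases Nat.eq_zero_or_pos r with rfl | hrpos
  · have hl0 : l = 0 := by
      by_contra h
      have hpos : 0 < l := Nat.pos_of_ne_zero h
      exact absurd (hsrc ⟨0, hpos⟩).1 (by omega)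
    subst hl0
    exact ⟨F, Ts, hseq, rfl, hr, fun p => p.elim0⟩
  have hsp_lt : ∀ p : Fin l, s p < r := fun p => (hsrc p).1
  have hBrep : ∀ p : Fin l, IsDiagonal m (F (s p)).1 :=
    fun p => (Ts (s p)).isDiagonal _ (hseq (s p) (hsp_lt p)).1
  have hAi : ∀ p : Fin l, ∀ i, i ≤ s p → (F (s p)).1 ∈ (Ts i).diagonals := by
    intro p i hi
    by_contra hnot
    have hmem : (F (s p)).1 ∈ (Ts (s p)).diagonals := (hseq (s p) (hsp_lt p)).1
    obtain ⟨k, hk1, hk2, hk3⟩ :=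
      SFS_exists_add hseq _ i (s p) hi (le_of_lt (hsp_lt p)) hnot hmem
    refine (hsrc p).2 k ⟨hk2, hsp_lt p, ?_⟩
    rw [hk3]
    exact SFS_neighbor_self hm hmem
  have hAii : ∀ p : Fin l, ∀ i, i ≤ s p → ∀ x y : Fin m, (F (s p)).1 = {x, y} → x ≠ y →
      ∀ cc, (SFS_ApexAt m (Ts i) x y cc ↔ SFS_ApexAt m (Ts (s p)) x y cc) := by
    intro p
    have key : ∀ k i, i ≤ s p → s p - i = k → ∀ x y : Fin m, (F (s p)).1 = {x, y} → x ≠ y →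
        ∀ cc, (SFS_ApexAt m (Ts i) x y cc ↔ SFS_ApexAt m (Ts (s p)) x y cc) := by
      intro k
      induction k with
      | zero =>
        intro i hi hk x y hexy hne cc
        have hieq : i = s p := by omega
        rw [hieq]
      | succ k ih =>
        intro i hi hk x y hexy hne cc
        have hi1 : i + 1 ≤ s p := by omega
        have hir : i < r := by have := hsp_lt p; omega
        have hflipi := hseq i hir
        have hmem1 : (F (s p)).1 ∈ (Ts (i + 1)).diagonals := hAi p (i + 1) hi1
        have hadjxy : ¬ PolyAdj m x y := SFS_diag_repr (hBrep p) hexy hne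
        obtain ⟨c', hc'⟩ := SFS_apex_exists hm (hexy ▸ hmem1) hne hadjxy
        have hc'sp : SFS_ApexAt m (Ts (s p)) x y c' :=
          (ih (i + 1) hi1 (by omega) x y hexy hne c').mp hc'
        have hmemsp : (F (s p)).1 ∈ (Ts (s p)).diagonals := hAi p (s p) le_rfl
        have htrisp : IsTriangle m (Ts (s p)) {x, y, c'} :=
          SFS_apex_isTriangle (hexy ▸ hmemsp) hc'sp
        have sidetrans : ∀ sd : Finset (Fin m), sd ⊆ ({x, y, c'} : Finset (Fin m)) →
            IsSide m (Ts (i + 1)) sd → IsSide m (Ts (s p)) sd → IsSide m (Ts i) sd := by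
          intro sd hsub hside1 hsidesp
          rcases hside1 with hedge | hmem
          · exact Or.inl hedge
          · have hdiag2 : IsDiagonal m sd := (Ts (i + 1)).isDiagonal _ hmem
            rw [hflipi.2.2] at hmem
            rcases Finset.mem_insert.mp hmem with heq2 | hmem'
            · exfalso
              have hsd_sp : sd ∈ (Ts (s p)).diagonals := SFS_side_diag hsidesp hdiag2
              refine (hsrc p).2 i ⟨by omega, hsp_lt p, ?_⟩
              rw [← heq2]
              refine ⟨hsd_sp, hmemsp, {x, y, c'}, htrisp, hsub, ?_⟩
              rw [hexy]; intro z hz; simp at hz ⊢; tauto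
            · exact Or.inr (Finset.mem_of_mem_erase hmem')
        have hcdown : SFS_ApexAt m (Ts i) x y c' := by
          obtain ⟨hb, hs1, hs2⟩ := hc'
          exact ⟨hb, sidetrans _ (by intro z hz; simp at hz ⊢; tauto) hs1 hc'sp.2.1,
            sidetrans _ (by intro z hz; simp at hz ⊢; tauto) hs2 hc'sp.2.2⟩
        constructor
        · intro h; rw [SFS_apex_unique h hcdown]; exact hc'sp
        · intro h; rw [SFS_apex_unique h hc'sp]; exact hcdown
    intro i hi
    exact key (s p - i) i hi rfl
  have hOppI : ∀ p : Fin l, ∀ i, i ≤ s p → SFS_Opp m (Ts i) (F (s p)).1 (F (s p)).2 := by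
    intro p i hi
    obtain ⟨a, b, cc, cc', heq, hc, hc', hdq⟩ := SFS_isFlip_opp hm (hseq (s p) (hsp_lt p))
    have hab : a ≠ b := (SFS_btw_ne hc.1).2.2
    exact ⟨a, b, cc, cc', heq, (hAii p i hi a b heq hab cc).mpr hc,
      (hAii p i hi b a (heq.trans (Finset.pair_comm a b)) hab.symm cc').mpr hc', hdq⟩
  have hKill : ∀ p q : Fin l, s p < s q → (F (s p)).1 ∈ (Ts (s q)).diagonals →
      Neighbor m (Ts (s q)) (F (s p)).1 (F (s q)).1 → False := by
    intro p q hlt hmem hnb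
    have hrm : (F (s p)).1 ∉ (Ts (s p + 1)).diagonals :=
      SFS_flip_removed (hseq (s p) (hsp_lt p))
    obtain ⟨k, hk1, hk2, hk3⟩ := SFS_exists_add hseq _ (s p + 1) (s q) (by omega)
      (le_of_lt (hsp_lt q)) hrm hmem
    exact (hsrc q).2 k ⟨hk2, hsp_lt q, hk3 ▸ hnb⟩
  have hB2 : ∀ p q : Fin l, p ≠ q → (F (s p)).1 ≠ (F (s q)).1 := by
    intro p q hne heq
    have hsne : s p ≠ s q := fun h => hne (hinj h)
    rcases Nat.lt_or_ge (s p) (s q) with hlt | hge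
    · exact hKill p q hlt (by rw [heq]; exact (hseq (s q) (hsp_lt q)).1)
        (by rw [heq]; exact SFS_neighbor_self hm (hseq (s q) (hsp_lt q)).1)
    · have hlt : s q < s p := by omega
      exact hKill q p hlt (by rw [← heq]; exact (hseq (s p) (hsp_lt p)).1)
        (by rw [← heq]; exact SFS_neighbor_self hm (hseq (s p) (hsp_lt p)).1)
  have hB5 : ∀ p : Fin l, ∀ i, i ≤ s p → (F (s p)).2 ∉ (Ts i).diagonals :=
    fun p i hi => (SFS_opp_props hm (hAi p i hi) (hOppI p i hi)).2.2.2
  have hB6 : ∀ p q : Fin l, p ≠ q → (F (s p)).2 ≠ (F (s q)).2 := by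
    intro p q hne heq
    have hsne : s p ≠ s q := fun h => hne (hinj h)
    rcases Nat.lt_or_ge (s p) (s q) with hlt | hge
    · have h1 : (F (s p)).2 ∈ (Ts (s p + 1)).diagonals :=
        SFS_flip_created_mem (hseq (s p) (hsp_lt p))
      exact hB5 q (s p + 1) (by omega) (by rw [← heq]; exact h1)
    · have h1 : (F (s q)).2 ∈ (Ts (s q + 1)).diagonals :=
        SFS_flip_created_mem (hseq (s q) (hsp_lt q))
      exact hB5 p (s q + 1) (by omega) (by rw [heq]; exact h1)
  have hB7 : ∀ p q : Fin l, (F (s p)).2 ≠ (F (s q)).1 := by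
    intro p q heq
    exact hB5 p 0 (Nat.zero_le _) (by rw [heq]; exact hAi q 0 (Nat.zero_le _))
  have hC : ∀ p q : Fin l, p ≠ q → ∀ i, i ≤ s p → i ≤ s q →
      ¬ Neighbor m (Ts i) (F (s p)).1 (F (s q)).1 := by
    have main : ∀ p q : Fin l, s p < s q → ∀ i, i ≤ s p → i ≤ s q →
        Neighbor m (Ts i) (F (s p)).1 (F (s q)).1 → False := by
      intro p q hlt i hip hiq hnb
      obtain ⟨hmp, hmq, t, htri, hpt, hqt⟩ := hnb
      obtain ⟨x, y, hxy, hadjq, heqq⟩ := hBrep q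
      obtain ⟨w, hwx, hwy, htw, hapex⟩ := SFS_apex_of_triangle hm htri hxy
        (by rw [← heqq]; exact hqt)
      have hqsp : (F (s q)).1 ∈ (Ts (s q)).diagonals := hAi q (s q) le_rfl
      have htriq : IsTriangle m (Ts (s q)) {x, y, w} := by
        rcases hapex with ha | ha
        · exact SFS_apex_isTriangle (by rw [← heqq]; exact hqsp)
            ((hAii q i hiq x y heqq hxy w).mp ha)
        · have h1 := SFS_apex_isTriangle
            (show ({y, x} : Finset (Fin m)) ∈ (Ts (s q)).diagonals by
              rw [← Finset.pair_comm x y, ← heqq]; exact hqsp)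
            ((hAii q i hiq y x (heqq.trans (Finset.pair_comm x y)) hxy.symm w).mp ha)
          rw [show ({x, y, w} : Finset (Fin m)) = {y, x, w} by ext z; simp; tauto]
          exact h1
      have hsub : (F (s p)).1 ⊆ ({x, y, w} : Finset (Fin m)) := by rw [← htw]; exact hpt
      obtain ⟨x2, y2, hxy2, -, heqp⟩ := hBrep p
      have hside : IsSide m (Ts (s q)) (F (s p)).1 := by
        rw [heqp]
        refine SFS_triangle_side htriq ?_ ?_ hxy2
        · exact hsub (by rw [heqp]; simp)
        · exact hsub (by rw [heqp]; simp)
      have hmemq : (F (s p)).1 ∈ (Ts (s q)).diagonals := SFS_side_diag hside (hBrep p)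
      refine hKill p q hlt hmemq ⟨hmemq, hqsp, {x, y, w}, htriq, hsub, ?_⟩
      rw [heqq]; intro z hz; simp at hz ⊢; tauto
    intro p q hne i hip hiq hnb
    have hsne : s p ≠ s q := fun h => hne (hinj h)
    rcases Nat.lt_or_ge (s p) (s q) with hlt | hge
    · exact main p q hlt i hip hiq hnb
    · have hlt : s q < s p := by omega
      exact main q p hlt i hiq hip (SFS_neighbor_symm hnb)
  -- pending-source multiflips U i
  have hU0 : ∀ i, ∃ Ui : Triangulation m, Ui.diagonals =
      ((Ts i).diagonals \
        ((((List.finRange l).filter (fun p => decide (i ≤ s p))).map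
          (fun p => ((F (s p)).1, (F (s p)).2))).map Prod.fst).toFinset) ∪
      ((((List.finRange l).filter (fun p => decide (i ≤ s p))).map
          (fun p => ((F (s p)).1, (F (s p)).2))).map Prod.snd).toFinset := by
    intro i
    refine SFS_multiflip hm _ (Ts i) ?_ ?_
    · intro u hu
      simp only [List.mem_map, List.mem_filter, List.mem_finRange, true_and,
        decide_eq_true_eq] at hu
      obtain ⟨p, hp, rfl⟩ := hu
      exact ⟨hAi p i hp, hOppI p i hp⟩
    · rw [List.pairwise_map]
      have hnd : ((List.finRange l).filter (fun p => decide (i ≤ s p))).Pairwise (· ≠ ·) :=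
        ((List.nodup_finRange l).filter _)
      refine hnd.imp_of_mem ?_
      intro p q hp hq hne
      have hip : i ≤ s p := by
        have := (List.mem_filter.mp hp).2; simpa using this
      have hiq : i ≤ s q := by
        have := (List.mem_filter.mp hq).2; simpa using this
      exact ⟨hB2 p q hne, hC p q hne i hip hiq⟩
  choose U hU using hU0
  have hmemU : ∀ i z, z ∈ (U i).diagonals ↔
      ((z ∈ (Ts i).diagonals ∧ ¬ ∃ p : Fin l, i ≤ s p ∧ (F (s p)).1 = z) ∨
        ∃ p : Fin l, i ≤ s p ∧ (F (s p)).2 = z) := by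
    intro i z
    rw [hU i]
    simp only [Finset.mem_union, Finset.mem_sdiff, List.mem_toFinset, List.mem_map,
      List.mem_filter, List.mem_finRange, true_and, decide_eq_true_eq]
    constructor
    · rintro (⟨h1, h2⟩ | ⟨u, ⟨p, hp, rfl⟩, h3⟩)
      · left
        refine ⟨h1, ?_⟩
        rintro ⟨p, hp1, hp2⟩
        exact h2 ⟨((F (s p)).1, (F (s p)).2), ⟨p, hp1, rfl⟩, hp2⟩
      · exact Or.inr ⟨p, hp, h3⟩
    · rintro (⟨h1, h2⟩ | ⟨p, hp1, hp2⟩)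
      · left
        refine ⟨h1, ?_⟩
        rintro ⟨u, ⟨p, hp1, rfl⟩, hp2⟩
        exact h2 ⟨p, hp1, hp2⟩
      · exact Or.inr ⟨((F (s p)).1, (F (s p)).2), ⟨p, hp1, rfl⟩, hp2⟩
  -- source steps leave U unchanged
  have hUsrc : ∀ p : Fin l, (U (s p)).diagonals = (U (s p + 1)).diagonals := by
    intro p
    ext z
    rw [hmemU, hmemU, (hseq (s p) (hsp_lt p)).2.2]
    simp only [Finset.mem_insert, Finset.mem_erase]
    constructor
    · rintro (⟨hz, hnE⟩ | ⟨q, hq, hzq⟩)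
      · left
        refine ⟨Or.inr ⟨?_, hz⟩, ?_⟩
        · intro hze; exact hnE ⟨p, le_rfl, hze.symm⟩
        · rintro ⟨q, hq, hzq⟩; exact hnE ⟨q, by omega, hzq⟩
      · by_cases hqp : q = p
        · subst hqp
          left
          refine ⟨Or.inl hzq.symm, ?_⟩
          rintro ⟨q', hq', hzq'⟩
          exact hB7 q q' (hzq.trans hzq'.symm)
        · right
          exact ⟨q, by (have : s q ≠ s p := fun h => hqp (hinj h); omega), hzq⟩
    · rintro (⟨(hzd | ⟨hzne, hz⟩), hnE⟩ | ⟨q, hq, hzq⟩)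
      · right; exact ⟨p, le_rfl, hzd.symm⟩
      · left
        refine ⟨hz, ?_⟩
        rintro ⟨q, hq, hzq⟩
        rcases eq_or_ne q p with rfl | hqp
        · exact hzne hzq.symm
        · exact hnE ⟨q, by (have : s q ≠ s p := fun h => hqp (hinj h); omega), hzq⟩
      · right; exact ⟨q, by omega, hzq⟩
  -- non-source steps are flips on U
  have hUstep : ∀ i, i < r → ¬ IsSource m r F Ts i →
      IsFlip m (U i) (U (i + 1)) (F i).1 (F i).2 := by
    intro i hir hns
    have hnsq : ∀ q : Fin l, s q ≠ i := fun q h => hns (h ▸ hsrc q)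
    have hflipi := hseq i hir
    have hpend : ∀ q : Fin l, i ≤ s q ↔ i + 1 ≤ s q :=
      fun q => by have := hnsq q; omega
    refine ⟨?_, ?_, ?_⟩
    · rw [hmemU]
      left
      refine ⟨hflipi.1, ?_⟩
      rintro ⟨q, hq, hzq⟩
      have h1 : (F (s q)).1 ∈ (Ts (i + 1)).diagonals := hAi q (i + 1) ((hpend q).mp hq)
      exact SFS_flip_removed hflipi (by rw [← hzq]; exact h1)
    · rw [hmemU]
      rintro (⟨h1, -⟩ | ⟨q, hq, hzq⟩)
      · exact hflipi.2.1 h1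
      · have h1 : (F (s q)).2 ∉ (Ts (i + 1)).diagonals :=
          hB5 q (i + 1) ((hpend q).mp hq)
        exact h1 (by rw [hzq]; exact SFS_flip_created_mem hflipi)
    · ext z
      rw [hmemU, hflipi.2.2]
      simp only [Finset.mem_insert, Finset.mem_erase]
      rw [hmemU]
      constructor
      · rintro (⟨(h1 | ⟨h1, h2⟩), hE⟩ | ⟨q, hq, hzq⟩)
        · exact Or.inl h1
        · exact Or.inr ⟨h1, Or.inl ⟨h2, fun ⟨q, hq, hzq⟩ => hE ⟨q, (hpend q).mp hq, hzq⟩⟩⟩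
        · refine Or.inr ⟨?_, Or.inr ⟨q, (hpend q).mpr hq, hzq⟩⟩
          intro hzf
          exact hB5 q i ((hpend q).mpr hq) (by rw [hzq, hzf]; exact hflipi.1)
      · rintro (h1 | ⟨h1, (⟨h2, hE⟩ | ⟨q, hq, hzq⟩)⟩)
        · left
          refine ⟨Or.inl h1, ?_⟩
          rintro ⟨q, hq, hzq⟩
          refine hflipi.2.1 ?_
          rw [← h1, ← hzq]
          exact hAi q i ((hpend q).mpr hq)
        · exact Or.inl ⟨Or.inr ⟨h1, h2⟩, fun ⟨q, hq, hzq⟩ => hE ⟨q, (hpend q).mpr hq, hzq⟩⟩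
        · exact Or.inr ⟨q, (hpend q).mp hq, hzq⟩
  -- prefix multiflips W k (flipping the first k sources in τ-order)
  have hW0' : ∀ k, ∃ Wk : Triangulation m, Wk.diagonals =
      ((Ts 0).diagonals \
        ((((List.finRange l).filter (fun q => decide ((τ.symm q).val < k))).map
          (fun q => ((F (s q)).1, (F (s q)).2))).map Prod.fst).toFinset) ∪
      ((((List.finRange l).filter (fun q => decide ((τ.symm q).val < k))).map
          (fun q => ((F (s q)).1, (F (s q)).2))).map Prod.snd).toFinset := by
    intro k
    refine SFS_multiflip hm _ (Ts 0) ?_ ?_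
    · intro u hu
      simp only [List.mem_map, List.mem_filter, List.mem_finRange, true_and,
        decide_eq_true_eq] at hu
      obtain ⟨p, hp, rfl⟩ := hu
      exact ⟨hAi p 0 (Nat.zero_le _), hOppI p 0 (Nat.zero_le _)⟩
    · rw [List.pairwise_map]
      have hnd : ((List.finRange l).filter (fun q => decide ((τ.symm q).val < k))).Pairwise (· ≠ ·) :=
        ((List.nodup_finRange l).filter _)
      refine hnd.imp_of_mem ?_
      intro p q hp hq hne
      exact ⟨hB2 p q hne, hC p q hne 0 (Nat.zero_le _) (Nat.zero_le _)⟩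
  choose W hW using hW0'
  have hmemW : ∀ k z, z ∈ (W k).diagonals ↔
      ((z ∈ (Ts 0).diagonals ∧ ¬ ∃ q : Fin l, (τ.symm q).val < k ∧ (F (s q)).1 = z) ∨
        ∃ q : Fin l, (τ.symm q).val < k ∧ (F (s q)).2 = z) := by
    intro k z
    rw [hW k]
    simp only [Finset.mem_union, Finset.mem_sdiff, List.mem_toFinset, List.mem_map,
      List.mem_filter, List.mem_finRange, true_and, decide_eq_true_eq]
    constructor
    · rintro (⟨h1, h2⟩ | ⟨u, ⟨q, hq, rfl⟩, h3⟩)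
      · left
        refine ⟨h1, ?_⟩
        rintro ⟨q, hq1, hq2⟩
        exact h2 ⟨((F (s q)).1, (F (s q)).2), ⟨q, hq1, rfl⟩, hq2⟩
      · exact Or.inr ⟨q, hq, h3⟩
    · rintro (⟨h1, h2⟩ | ⟨q, hq1, hq2⟩)
      · left
        refine ⟨h1, ?_⟩
        rintro ⟨u, ⟨q, hq1, rfl⟩, hq2⟩
        exact h2 ⟨q, hq1, hq2⟩
      · exact Or.inr ⟨((F (s q)).1, (F (s q)).2), ⟨q, hq1, rfl⟩, hq2⟩
  have hWstep : ∀ k (hk : k < l),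
      IsFlip m (W k) (W (k + 1)) (F (s (τ ⟨k, hk⟩))).1 (F (s (τ ⟨k, hk⟩))).2 := by
    intro k hk
    have hsymm : τ.symm (τ ⟨k, hk⟩) = ⟨k, hk⟩ := τ.symm_apply_apply _
    have hk1 : ∀ q : Fin l, ((τ.symm q).val < k + 1 ↔ ((τ.symm q).val < k ∨ q = τ ⟨k, hk⟩)) := by
      intro q
      constructor
      · intro h
        rcases Nat.lt_or_ge (τ.symm q).val k with h' | h'
        · exact Or.inl h'
        · right
          have hq : τ.symm q = ⟨k, hk⟩ := Fin.ext (show (τ.symm q).val = k by omega)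
          exact τ.symm.injective (hq.trans hsymm.symm)
      · rintro (h | rfl)
        · omega
        · rw [hsymm]; exact Nat.lt_succ_self k
    refine ⟨?_, ?_, ?_⟩
    · rw [hmemW]
      left
      refine ⟨hAi _ 0 (Nat.zero_le _), ?_⟩
      rintro ⟨q, hq, hzq⟩
      have hqp : q ≠ τ ⟨k, hk⟩ := by
        intro h; subst h; rw [hsymm] at hq; exact absurd hq (lt_irrefl k)
      exact hB2 q _ hqp hzq
    · rw [hmemW]
      rintro (⟨h1, -⟩ | ⟨q, hq, hzq⟩)
      · exact hB5 _ 0 (Nat.zero_le _) h1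
      · have hqp : q ≠ τ ⟨k, hk⟩ := by
          intro h; subst h; rw [hsymm] at hq; exact absurd hq (lt_irrefl k)
        exact hB6 q _ hqp hzq
    · ext z
      rw [hmemW]
      simp only [Finset.mem_insert, Finset.mem_erase]
      rw [hmemW]
      constructor
      · rintro (⟨hz0, hnE⟩ | ⟨q, hq, hzq⟩)
        · refine Or.inr ⟨?_, Or.inl ⟨hz0, ?_⟩⟩
          · intro hze
            exact hnE ⟨τ ⟨k, hk⟩, (hk1 _).mpr (Or.inr rfl), hze.symm⟩
          · rintro ⟨q, hq, hzq⟩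
            exact hnE ⟨q, (hk1 q).mpr (Or.inl hq), hzq⟩
        · rcases (hk1 q).mp hq with hq' | rfl
          · refine Or.inr ⟨?_, Or.inr ⟨q, hq', hzq⟩⟩
            intro hze
            exact hB7 q (τ ⟨k, hk⟩) (hzq.trans hze)
          · exact Or.inl hzq.symm
      · rintro (h1 | ⟨hne, (⟨hz0, hnE⟩ | ⟨q, hq, hzq⟩)⟩)
        · exact Or.inr ⟨τ ⟨k, hk⟩, (hk1 _).mpr (Or.inr rfl), h1.symm⟩
        · left
          refine ⟨hz0, ?_⟩
          rintro ⟨q, hq, hzq⟩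
          rcases (hk1 q).mp hq with hq' | rfl
          · exact hnE ⟨q, hq', hzq⟩
          · exact hne hzq.symm
        · exact Or.inr ⟨q, (hk1 q).mpr (Or.inl hq), hzq⟩
  have hW0T : (W 0).diagonals = (Ts 0).diagonals := by
    ext z
    rw [hmemW]
    constructor
    · rintro (⟨h, -⟩ | ⟨q, hq, -⟩)
      · exact h
      · omega
    · intro h
      left
      exact ⟨h, by rintro ⟨q, hq, -⟩; omega⟩
  have hWl_U0 : (W l).diagonals = (U 0).diagonals := by
    ext z
    rw [hmemW, hmemU]
    constructor
    · rintro (⟨h1, h2⟩ | ⟨q, hq, h3⟩)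
      · left
        exact ⟨h1, by rintro ⟨q, -, hq2⟩; exact h2 ⟨q, (τ.symm q).isLt, hq2⟩⟩
      · exact Or.inr ⟨q, Nat.zero_le _, h3⟩
    · rintro (⟨h1, h2⟩ | ⟨q, -, h3⟩)
      · left
        exact ⟨h1, by rintro ⟨q, -, hq2⟩; exact h2 ⟨q, Nat.zero_le _, hq2⟩⟩
      · exact Or.inr ⟨q, (τ.symm q).isLt, h3⟩
  have hUchain : ∀ i j, i ≤ j → j ≤ r →
      (∀ x, i ≤ x → x < j → IsSource m r F Ts x) → (U i).diagonals = (U j).diagonals := by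
    intro i j hij
    induction j, hij using Nat.le_induction with
    | base => intro _ _; rfl
    | succ j hij ih =>
      intro hjr hall'
      have hsj : IsSource m r F Ts j := hall' j hij (by omega)
      obtain ⟨p, hp⟩ := hall j hsj
      rw [ih (by omega) (fun x hx1 hx2 => hall' x hx1 (by omega)), ← hp]
      exact hUsrc p
  have hUr : (U r).diagonals = (Ts r).diagonals := by
    ext z
    rw [hmemU]
    constructor
    · rintro (⟨h, -⟩ | ⟨q, hq, -⟩)
      · exact h
      · have := hsp_lt q; omega
    · intro h
      left
      exact ⟨h, by rintro ⟨q, hq, -⟩; have := hsp_lt q; omega⟩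
  -- counting sources
  have hSrcCard : ((Finset.range r).filter (fun i => IsSource m r F Ts i)).card = l := by
    have himg : Finset.image s Finset.univ =
        (Finset.range r).filter (fun i => IsSource m r F Ts i) := by
      ext i
      simp only [Finset.mem_image, Finset.mem_univ, true_and, Finset.mem_filter,
        Finset.mem_range]
      constructor
      · rintro ⟨p, rfl⟩; exact ⟨hsp_lt p, hsrc p⟩
      · rintro ⟨-, hi⟩; exact hall i hi
    rw [← himg, Finset.card_image_of_injective _ hinj, Finset.card_univ, Fintype.card_fin]
  have hlr : l ≤ r := by
    rw [← hSrcCard]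
    exact le_trans (Finset.card_filter_le _ _) (le_of_eq (Finset.card_range r))
  have hNSCard : ((Finset.range r).filter (fun i => ¬ IsSource m r F Ts i)).card = r - l := by
    have h1 := Finset.card_filter_add_card_filter_not
      (s := Finset.range r) (p := fun i => IsSource m r F Ts i)
    rw [hSrcCard, Finset.card_range] at h1
    omega
  have hex : ∀ i : ℕ, ∃ j, i ≤ j ∧ ¬ IsSource m r F Ts j :=
    fun i => ⟨r + i, by omega, fun h => by have := h.1; omega⟩
  set nns : ℕ → ℕ := fun i => Nat.find (hex i) with hnns
  have hnns_ge : ∀ i, i ≤ nns i := fun i => (Nat.find_spec (hex i)).1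
  have hnns_ns : ∀ i, ¬ IsSource m r F Ts (nns i) := fun i => (Nat.find_spec (hex i)).2
  have hnns_min : ∀ i x, i ≤ x → x < nns i → IsSource m r F Ts x := by
    intro i x hix hx
    by_contra h
    exact Nat.find_min (hex i) hx ⟨hix, h⟩
  have hnns_min' : ∀ i x, i ≤ x → ¬ IsSource m r F Ts x → nns i ≤ x :=
    fun i x hix hx => Nat.find_min' (hex i) ⟨hix, hx⟩
  set c : ℕ → ℕ := fun k => Nat.rec (nns 0) (fun _ ck => nns (ck + 1)) k with hcdef
  have hc0 : c 0 = nns 0 := rfl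
  have hcs : ∀ k, c (k + 1) = nns (c k + 1) := fun k => rfl
  have hc_ns : ∀ k, ¬ IsSource m r F Ts (c k) := by
    intro k
    cases k with
    | zero => exact hnns_ns 0
    | succ k => rw [hcs]; exact hnns_ns _
  have hc_mono : ∀ k, c k < c (k + 1) := by
    intro k
    rw [hcs]
    have := hnns_ge (c k + 1)
    omega
  have hc_betw : ∀ k x, c k < x → x < c (k + 1) → IsSource m r F Ts x := by
    intro k x h1 h2
    rw [hcs] at h2
    exact hnns_min _ x (by omega) h2
  have hc_below : ∀ x, x < c 0 → IsSource m r F Ts x := by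
    intro x hx
    rw [hc0] at hx
    exact hnns_min 0 x (by omega) hx
  have hCARD : ∀ k,
      ((Finset.range (c k + 1)).filter (fun i => ¬ IsSource m r F Ts i)).card = k + 1 := by
    intro k
    induction k with
    | zero =>
      have hsing : (Finset.range (c 0 + 1)).filter (fun i => ¬ IsSource m r F Ts i) = {c 0} := by
        ext i
        simp only [Finset.mem_filter, Finset.mem_range, Finset.mem_singleton]
        constructor
        · rintro ⟨h1, h2⟩
          by_contra hne
          exact h2 (hc_below i (by omega))
        · rintro rfl
          exact ⟨by omega, hc_ns 0⟩
      rw [hsing, Finset.card_singleton]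
    | succ k ih =>
      have hmono := hc_mono k
      have hsplit : Finset.range (c (k + 1) + 1) =
          Finset.range (c k + 1) ∪ Finset.Ico (c k + 1) (c (k + 1) + 1) := by
        ext i
        simp only [Finset.mem_range, Finset.mem_union, Finset.mem_Ico]
        omega
      have hdisj : Disjoint
          ((Finset.range (c k + 1)).filter (fun i => ¬ IsSource m r F Ts i))
          ((Finset.Ico (c k + 1) (c (k + 1) + 1)).filter (fun i => ¬ IsSource m r F Ts i)) := by
        rw [Finset.disjoint_left]
        intro a ha hb
        rw [Finset.mem_filter, Finset.mem_range] at ha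
        rw [Finset.mem_filter, Finset.mem_Ico] at hb
        omega
      have hsing : (Finset.Ico (c k + 1) (c (k + 1) + 1)).filter
          (fun i => ¬ IsSource m r F Ts i) = {c (k + 1)} := by
        ext i
        simp only [Finset.mem_filter, Finset.mem_Ico, Finset.mem_singleton]
        constructor
        · rintro ⟨⟨h1, h2⟩, h3⟩
          by_contra hne
          exact h3 (hc_betw k i (by omega) (by omega))
        · rintro rfl
          exact ⟨⟨by omega, by omega⟩, hc_ns (k + 1)⟩
      rw [hsplit, Finset.filter_union, Finset.card_union_of_disjoint hdisj, ih, hsing,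
        Finset.card_singleton]
  have hc_lt_r : ∀ k, k < r - l → c k < r := by
    intro k hk
    by_contra hge
    push_neg at hge
    have hsub : ((Finset.range r).filter (fun i => ¬ IsSource m r F Ts i)) ∪
        Finset.Ico r (c k + 1) ⊆
        (Finset.range (c k + 1)).filter (fun i => ¬ IsSource m r F Ts i) := by
      intro x hx
      rcases Finset.mem_union.mp hx with hx | hx
      · obtain ⟨h1, h2⟩ := Finset.mem_filter.mp hx
        rw [Finset.mem_range] at h1
        exact Finset.mem_filter.mpr ⟨Finset.mem_range.mpr (by omega), h2⟩
      · obtain ⟨h1, h2⟩ := Finset.mem_Ico.mp hx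
        exact Finset.mem_filter.mpr ⟨Finset.mem_range.mpr (by omega),
          fun h => by have := h.1; omega⟩
    have hdisj : Disjoint ((Finset.range r).filter (fun i => ¬ IsSource m r F Ts i))
        (Finset.Ico r (c k + 1)) := by
      rw [Finset.disjoint_left]
      intro a ha hb
      rw [Finset.mem_filter, Finset.mem_range] at ha
      rw [Finset.mem_Ico] at hb
      omega
    have hcard := Finset.card_le_card hsub
    rw [Finset.card_union_of_disjoint hdisj, hNSCard, hCARD k, Nat.card_Ico] at hcard
    omega
  have hc_tail : l < r → ∀ x, c (r - l - 1) < x → x < r → IsSource m r F Ts x := by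
    intro hlr' x h1 h2
    by_contra hns
    have hrl1 : r - l = (r - l - 1) + 1 := by omega
    have hle : c (r - l) ≤ x := by
      rw [hrl1, hcs]
      exact hnns_min' _ x (by omega) hns
    have hcr : c (r - l) < r := by omega
    have hsub : (Finset.range (c (r - l) + 1)).filter (fun i => ¬ IsSource m r F Ts i) ⊆
        (Finset.range r).filter (fun i => ¬ IsSource m r F Ts i) :=
      Finset.filter_subset_filter _ (by
        intro a ha
        rw [Finset.mem_range] at ha ⊢
        omega)
    have hcard := Finset.card_le_card hsub
    rw [hCARD, hNSCard] at hcard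
    omega
  have hAllSrc : l = r → ∀ x, x < r → IsSource m r F Ts x := by
    intro hlr' x hx
    by_contra hns
    have hpos : 0 < ((Finset.range r).filter (fun i => ¬ IsSource m r F Ts i)).card :=
      Finset.card_pos.mpr ⟨x, Finset.mem_filter.mpr ⟨Finset.mem_range.mpr hx, hns⟩⟩
    rw [hNSCard] at hpos
    omega
  -- assembly
  refine ⟨fun j => if h : j < l then ((F (s (τ ⟨j, h⟩))).1, (F (s (τ ⟨j, h⟩))).2)
      else F (c (j - l)),
    fun j => if j ≤ l then W j else U (c (j - l - 1) + 1), ?_, ?_, ?_, ?_⟩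
  · -- flip sequence
    intro j hj
    by_cases hjl : j < l
    · have hj1 : j + 1 ≤ l := hjl
      simp only [dif_pos hjl, if_pos (show j ≤ l by omega), if_pos hj1]
      exact hWstep j hjl
    · push_neg at hjl
      have hkr : j - l < r - l := by omega
      have hclt : c (j - l) < r := hc_lt_r _ hkr
      have hstep := hUstep (c (j - l)) hclt (hc_ns _)
      rcases eq_or_lt_of_le hjl with hjeq | hlj
      · subst hjeq  -- j = l  (hjeq : l = j, subst turns j into l)
        simp only [dif_neg (lt_irrefl l), if_pos le_rfl, if_neg (show ¬ l + 1 ≤ l by omega)]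
        have e1 : l + 1 - l - 1 = 0 := by omega
        have e2 : l - l = 0 := by omega
        rw [e1, e2]
        rw [e2] at hstep hclt
        have h0eq : (U (c 0)).diagonals = (W l).diagonals := by
          rw [hWl_U0]
          exact (hUchain 0 (c 0) (by omega) (by omega)
            (fun x hx1 hx2 => hc_below x hx2)).symm
        exact SFS_isFlip_congr h0eq rfl hstep
      · simp only [dif_neg (show ¬ j < l by omega), if_neg (show ¬ j ≤ l by omega),
          if_neg (show ¬ j + 1 ≤ l by omega)]
        have e1 : j + 1 - l - 1 = j - l := by omega
        rw [e1]
        have e2 : j - l = (j - l - 1) + 1 := by omega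
        have hchain : (U (c (j - l - 1) + 1)).diagonals = (U (c (j - l))).diagonals := by
          refine hUchain _ _ ?_ (by omega) ?_
          · rw [e2, hcs]
            exact hnns_ge _
          · intro x hx1 hx2
            rw [e2] at hx2
            exact hc_betw _ x (by omega) hx2
        exact SFS_isFlip_congr hchain.symm rfl hstep
  · -- start
    simp only [if_pos (Nat.zero_le l)]
    exact SFS_tri_ext hW0T
  · -- end
    by_cases hrl : r ≤ l
    · have hrl' : l = r := le_antisymm hlr hrl
      simp only [if_pos hrl]
      apply SFS_tri_ext
      rw [← hr, ← hUr,
        ← hUchain 0 r (by omega) le_rfl (fun x _ hx2 => hAllSrc hrl' x hx2), ← hWl_U0, hrl']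
    · push_neg at hrl
      simp only [if_neg (show ¬ r ≤ l by omega)]
      apply SFS_tri_ext
      rw [hUchain (c (r - l - 1) + 1) r
        (by have := hc_lt_r (r - l - 1) (by omega); omega) le_rfl
        (fun x hx1 hx2 => hc_tail hrl x (by omega) hx2), hUr, hr]
  · -- first l flips
    intro p
    simp only [dif_pos p.isLt]
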